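/- Cycle optimality condition: Let G be a finite connected graph with vector edge costs and let OWA have non-increasing nonnegative weights. Let C be a cycle of G and e ∈ C an edge such that OWA(v^{e'} − v^e) ≤ 0 for all edges e' ∈ C. Then there exists an OWA-optimal spanning tree of G not containing e. -/

import Mathlib

noncomputable def sortedDesc {p : ℕ} (y : Fin p → ℝ) : Fin p → ℝ :=
  fun i => y (Tuple.sort y (Fin.rev i))

/-- Ordered weighted average. -/
noncomputable def owa {p : ℕ} (w y : Fin p → ℝ) : ℝ :=
  ∑ i, w i * sortedDesc y i


/-- The vector cost of a subgraph: sum of the edge cost vectors over its edges. -/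
noncomputable def cost {V : Type*} [Fintype V] {p : ℕ} (v : Sym2 V → Fin p → ℝ)
    (T : SimpleGraph V) : Fin p → ℝ :=
  ∑ e ∈ T.edgeSet.toFinite.toFinset, v e

open SimpleGraph

section OwaLemmas

variable {p : ℕ}

lemma sortedDesc_antitone (y : Fin p → ℝ) : Antitone (sortedDesc y) := by
  intro i j hij
  exact Tuple.monotone_sort y (Fin.rev_le_rev.mpr hij)

lemma owa_eq_sum_perm (w y : Fin p → ℝ) :
    owa w y = ∑ i, w i * y ((Fin.revPerm.trans (Tuple.sort y)) i) := by
  unfold owa sortedDesc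
  rfl

lemma sum_comp_perm_le_owa {w : Fin p → ℝ} (hw : Antitone w) (y : Fin p → ℝ)
    (σ : Equiv.Perm (Fin p)) : ∑ i, w i * y (σ i) ≤ owa w y := by
  have hmono : Monovary w (sortedDesc y) := by
    intro i j hij
    by_cases h : j ≤ i
    · exact hw h
    · exact absurd (sortedDesc_antitone y (le_of_not_ge h)) (not_le.mpr hij)
  set τ : Equiv.Perm (Fin p) := σ.trans (((Tuple.sort y)⁻¹ : Equiv.Perm (Fin p)).trans Fin.revPerm) with hτ
  have hcomp : ∀ i, y (σ i) = sortedDesc y (τ i) := by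
    intro i
    simp only [hτ, Equiv.trans_apply, sortedDesc, Fin.revPerm_apply, Fin.rev_rev]
    simp
  calc ∑ i, w i * y (σ i) = ∑ i, w i * sortedDesc y (τ i) := by
        simp_rw [hcomp]
    _ ≤ ∑ i, w i * sortedDesc y i := hmono.sum_mul_comp_perm_le_sum_mul
    _ = owa w y := rfl

lemma owa_add_le {w : Fin p → ℝ} (hw : Antitone w) (x y : Fin p → ℝ) :
    owa w (x + y) ≤ owa w x + owa w y := by
  set σ : Equiv.Perm (Fin p) := Fin.revPerm.trans (Tuple.sort (x + y)) with hσ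
  have h : owa w (x + y) = (∑ i, w i * x (σ i)) + ∑ i, w i * y (σ i) := by
    rw [owa_eq_sum_perm, ← Finset.sum_add_distrib]
    refine Finset.sum_congr rfl fun i _ => ?_
    simp [hσ, Pi.add_apply, mul_add, Equiv.trans_apply]
  rw [h]
  exact add_le_add (sum_comp_perm_le_owa hw x σ) (sum_comp_perm_le_owa hw y σ)

end OwaLemmas

section GraphLemmas

variable {V : Type*}

/-- If the endpoints of a deleted edge remain reachable, every walk endpoint pair
remains reachable after deleting the edge. -/
lemma reach_of_walk_delete {H : SimpleGraph V} {e : Sym2 V} {x y : V} (hxy : e = s(x, y))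
    (hr : (H \ SimpleGraph.fromEdgeSet {e}).Reachable x y) {a b : V} (wk : H.Walk a b) :
    (H \ SimpleGraph.fromEdgeSet {e}).Reachable a b := by
  induction wk with
  | nil => rfl
  | @cons a' c' b' h q ih =>
    refine Reachable.trans ?_ ih
    by_cases hcase : s(a', c') = e
    · rw [hxy, Sym2.eq_iff] at hcase
      rcases hcase with ⟨rfl, rfl⟩ | ⟨rfl, rfl⟩
      · exact hr
      · exact hr.symm
    · have hadj : (H \ SimpleGraph.fromEdgeSet {e}).Adj a' c' := by
        rw [sdiff_adj]
        refine ⟨h, ?_⟩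
        rw [fromEdgeSet_adj]
        simp [hcase]
      exact hadj.reachable

/-- After deleting a tree edge `s(a,b)`, every vertex connected to `a` in the original
graph is still reachable from `a` or from `b`. -/
lemma reach_dichotomy_aux {T : SimpleGraph V} {a b : V} {x y : V}
    (wk : T.Walk x y)
    (hy : (T \ SimpleGraph.fromEdgeSet {s(a, b)}).Reachable y a ∨
      (T \ SimpleGraph.fromEdgeSet {s(a, b)}).Reachable y b) :
    (T \ SimpleGraph.fromEdgeSet {s(a, b)}).Reachable x a ∨
      (T \ SimpleGraph.fromEdgeSet {s(a, b)}).Reachable x b := by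
  induction wk with
  | nil => exact hy
  | @cons x' z' _ h q ih =>
    have ih := ih hy
    by_cases hcase : s(x', z') = s(a, b)
    · rw [Sym2.eq_iff] at hcase
      rcases hcase with ⟨rfl, rfl⟩ | ⟨rfl, rfl⟩
      · exact Or.inl (Reachable.refl _)
      · exact Or.inr (Reachable.refl _)
    · have hadj : (T \ SimpleGraph.fromEdgeSet {s(a, b)}).Adj x' z' := by
        rw [sdiff_adj]
        refine ⟨h, ?_⟩
        rw [fromEdgeSet_adj]
        simp [hcase]
      rcases ih with h1 | h1
      · exact Or.inl (hadj.reachable.trans h1)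
      · exact Or.inr (hadj.reachable.trans h1)

lemma reach_dichotomy {T : SimpleGraph V} {a b : V} {x : V}
    (wk : T.Walk x a) :
    (T \ SimpleGraph.fromEdgeSet {s(a, b)}).Reachable x a ∨
      (T \ SimpleGraph.fromEdgeSet {s(a, b)}).Reachable x b :=
  reach_dichotomy_aux wk (Or.inl (Reachable.refl _))

lemma edgeSet_sdiff_fromEdgeSet_singleton (H : SimpleGraph V) (e : Sym2 V) :
    (H \ SimpleGraph.fromEdgeSet {e}).edgeSet = H.edgeSet \ {e} := by
  ext f
  simp only [edgeSet_sdiff, edgeSet_fromEdgeSet, Set.mem_diff, Set.mem_singleton_iff,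
    Set.mem_setOf_eq, not_and, not_not]
  constructor
  · rintro ⟨hf, h2⟩
    refine ⟨hf, fun hfe => ?_⟩
    have := h2 hfe
    exact (SimpleGraph.not_isDiag_of_mem_edgeSet H hf) this
  · rintro ⟨hf, h2⟩
    exact ⟨hf, fun hfe => absurd hfe h2⟩

lemma exists_spanning_tree_aux [Fintype V] :
    ∀ n (G : SimpleGraph V), G.edgeSet.toFinite.toFinset.card ≤ n → G.Connected →
      ∃ T : SimpleGraph V, T ≤ G ∧ T.IsTree := by
  intro n
  induction n with
  | zero =>
    intro G hcard hG
    refine ⟨G, le_refl _, hG, ?_⟩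
    intro z q hq
    have hempty : G.edgeSet = ∅ :=
      Set.Finite.toFinset_eq_empty.mp (Finset.card_eq_zero.mp (Nat.le_zero.mp hcard))
    cases q with
    | nil => exact absurd hq (Walk.IsCycle.not_of_nil)
    | cons h q' =>
      have hmem : s(_, _) ∈ G.edgeSet :=
        (Walk.cons h q').edges_subset_edgeSet List.mem_cons_self
      rw [hempty] at hmem
      exact hmem
  | succ n ih =>
    intro G hcard hG
    by_cases hA : G.IsAcyclic
    · exact ⟨G, le_refl _, hG, hA⟩
    · rw [IsAcyclic] at hA
      push_neg at hA
      obtain ⟨z, q, hq⟩ := hA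
      obtain ⟨x, y, e, he, hxy⟩ : ∃ x y : V, ∃ e, e ∈ q.edges ∧ e = s(x, y) := by
        cases q with
        | nil => exact absurd hq (Walk.IsCycle.not_of_nil)
        | @cons _ z' _ h q => exact ⟨z, z', _, List.mem_cons_self, rfl⟩
      subst hxy
      have hadjxy : G.Adj x y := q.adj_of_mem_edges he
      have hreach : (G \ SimpleGraph.fromEdgeSet {s(x, y)}).Reachable x y :=
        (adj_and_reachable_delete_edges_iff_exists_cycle.mpr ⟨z, q, hq, he⟩).2
      set G' := G \ SimpleGraph.fromEdgeSet {s(x, y)} with hG'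
      have hG'conn : G'.Connected := by
        rw [connected_iff]
        refine ⟨fun a b => ?_, hG.nonempty⟩
        obtain ⟨wk⟩ := hG.preconnected a b
        exact reach_of_walk_delete rfl hreach wk
      have hG'edge : G'.edgeSet = G.edgeSet \ {s(x, y)} :=
        edgeSet_sdiff_fromEdgeSet_singleton G _
      have hcard' : G'.edgeSet.toFinite.toFinset.card ≤ n := by
        have hss : G'.edgeSet.toFinite.toFinset ⊂ G.edgeSet.toFinite.toFinset := by
          constructor
          · intro f hf
            simp only [Set.Finite.mem_toFinset] at hf ⊢
            rw [hG'edge] at hf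
            exact hf.1
          · intro hsub
            have : s(x, y) ∈ G'.edgeSet.toFinite.toFinset := by
              apply hsub
              simp only [Set.Finite.mem_toFinset]
              exact hadjxy
            simp only [Set.Finite.mem_toFinset, hG'edge] at this
            exact this.2 rfl
        have := Finset.card_lt_card hss
        omega
      obtain ⟨T, hT, htree⟩ := ih G' hcard' hG'conn
      exact ⟨T, hT.trans sdiff_le, htree⟩

lemma exists_spanning_tree [Fintype V] (G : SimpleGraph V) (hG : G.Connected) :
    ∃ T : SimpleGraph V, T ≤ G ∧ T.IsTree :=
  exists_spanning_tree_aux _ G le_rfl hG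

end GraphLemmas

theorem cycle_optimality_condition {V : Type*} [Fintype V] {p : ℕ}
    (G : SimpleGraph V) (hG : G.Connected)
    (v : Sym2 V → Fin p → ℝ) (w : Fin p → ℝ) (hw : Antitone w) (hw0 : ∀ i, 0 ≤ w i)
    (u : V) (c : G.Walk u u) (hc : c.IsCycle)
    (e0 : Sym2 V) (he0 : e0 ∈ c.edges)
    (hworst : ∀ e' ∈ c.edges, owa w (v e' - v e0) ≤ 0) :
    ∃ T : SimpleGraph V, T ≤ G ∧ T.IsTree ∧ e0 ∉ T.edgeSet ∧
      ∀ T' : SimpleGraph V, T' ≤ G → T'.IsTree →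
        owa w (cost v T) ≤ owa w (cost v T') := by
  classical
  -- pick an owa-minimal spanning tree
  obtain ⟨T₀, hT₀G, hT₀⟩ := exists_spanning_tree G hG
  set 𝒮 : Set (SimpleGraph V) := {T | T ≤ G ∧ T.IsTree} with h𝒮
  obtain ⟨T, hTS, hTmin⟩ := Set.exists_min_image 𝒮 (fun T => owa w (cost v T))
    (Set.toFinite 𝒮) ⟨T₀, hT₀G, hT₀⟩
  obtain ⟨hTG, hTtree⟩ := hTS
  by_cases heT : e0 ∈ T.edgeSet
  · -- exchange argument
    revert he0 hworst heT
    induction e0 using Sym2.ind with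
    | _ a b =>
    intro he0 hworst heT
    have hab : T.Adj a b := heT
    set D := T \ SimpleGraph.fromEdgeSet {s(a, b)} with hD
    -- the deleted edge is a bridge of the tree T
    have hbridge : ¬ D.Reachable a b := by
      have := (isAcyclic_iff_forall_adj_isBridge.mp hTtree.2 hab)
      rw [isBridge_iff] at this
      exact this
    -- the cycle as a walk in the graph of its own edges
    set Gc : SimpleGraph V := SimpleGraph.fromEdgeSet {e | e ∈ c.edges} with hGc
    have hce : ∀ e ∈ c.edges, e ∈ Gc.edgeSet := by
      intro e he
      rw [hGc, edgeSet_fromEdgeSet]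
      exact ⟨he, SimpleGraph.not_isDiag_of_mem_edgeSet G (c.edges_subset_edgeSet he)⟩
    have hc' : (c.transfer Gc hce).IsCycle := hc.transfer hce
    have he0' : s(a, b) ∈ (c.transfer Gc hce).edges := by
      rw [Walk.edges_transfer]; exact he0
    have hreach : (Gc \ SimpleGraph.fromEdgeSet {s(a, b)}).Reachable a b :=
      (adj_and_reachable_delete_edges_iff_exists_cycle.mpr ⟨u, _, hc', he0'⟩).2
    obtain ⟨pwalk⟩ := hreach
    -- the side of `a` after deleting the edge from T
    set S₁ : Set V := {x | D.Reachable x a} with hS₁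
    have haS : a ∈ S₁ := Reachable.refl _
    have hbS : b ∉ S₁ := fun hb => hbridge hb.symm
    obtain ⟨d, hd, hdfst, hdsnd⟩ := pwalk.exists_boundary_dart S₁ haS hbS
    set x := d.fst
    set y := d.snd
    have hdadj : (Gc \ SimpleGraph.fromEdgeSet {s(a, b)}).Adj x y := d.adj
    rw [sdiff_adj] at hdadj
    obtain ⟨hGcxy, hnot⟩ := hdadj
    rw [hGc, fromEdgeSet_adj] at hGcxy
    obtain ⟨hxyc, hxyne⟩ := hGcxy
    have hxyne0 : s(x, y) ≠ s(a, b) := by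
      intro hEq
      apply hnot
      rw [fromEdgeSet_adj]
      exact ⟨by simp [hEq], hxyne⟩
    have hGxy : G.Adj x y := c.edges_subset_edgeSet hxyc
    -- the crossing edge is not in T
    have hxyT : s(x, y) ∉ T.edgeSet := by
      intro hmem
      have hDadj : D.Adj x y := by
        rw [hD, sdiff_adj]
        refine ⟨hmem, ?_⟩
        rw [fromEdgeSet_adj]
        simp [hxyne0]
      exact hdsnd (hDadj.symm.reachable.trans hdfst)
    -- the new tree
    set T' : SimpleGraph V := SimpleGraph.fromEdgeSet (insert s(x, y) (T.edgeSet \ {s(a, b)}))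
      with hT'
    have hT'edge : T'.edgeSet = insert s(x, y) (T.edgeSet \ {s(a, b)}) := by
      rw [hT', edgeSet_fromEdgeSet]
      ext e
      simp only [Set.mem_diff, Set.mem_setOf_eq]
      constructor
      · rintro ⟨h1, -⟩
        exact h1
      · intro h1
        refine ⟨h1, ?_⟩
        rcases h1 with rfl | ⟨he1, -⟩
        · exact fun hdiag => hxyne (Sym2.mk_isDiag_iff.mp hdiag)
        · exact SimpleGraph.not_isDiag_of_mem_edgeSet T he1
    have hT'le : T' ≤ G := by
      rw [hT']
      have hsub : insert s(x, y) (T.edgeSet \ {s(a, b)}) ⊆ G.edgeSet := by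
        rintro e (rfl | ⟨he1, -⟩)
        · exact hGxy
        · exact edgeSet_mono hTG he1
      calc SimpleGraph.fromEdgeSet (insert s(x, y) (T.edgeSet \ {s(a, b)}))
          ≤ SimpleGraph.fromEdgeSet G.edgeSet := fromEdgeSet_mono hsub
        _ = G := fromEdgeSet_edgeSet G
    have he0T' : s(a, b) ∉ T'.edgeSet := by
      rw [hT'edge]
      rintro (hEq | ⟨-, h2⟩)
      · exact hxyne0 hEq.symm
      · exact h2 rfl
    have hDT' : D ≤ T' := by
      intro p' q' hpq
      rw [hD, sdiff_adj, fromEdgeSet_adj] at hpq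
      obtain ⟨h1, h2⟩ := hpq
      rw [hT', fromEdgeSet_adj]
      refine ⟨Or.inr ⟨h1, ?_⟩, h1.ne⟩
      intro hEq
      exact h2 ⟨by simp [hEq], h1.ne⟩
    have hT'xy : T'.Adj x y := by
      rw [hT', fromEdgeSet_adj]
      exact ⟨Or.inl rfl, hxyne⟩
    -- connectivity of T'
    have hxa : D.Reachable x a := hdfst
    have hyb : D.Reachable y b := by
      obtain ⟨wk⟩ := hTtree.1.preconnected y a
      rcases reach_dichotomy (b := b) wk with h1 | h1
      · exact absurd h1 hdsnd
      · exact h1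
    have hT'ba : T'.Reachable b a :=
      ((hyb.mono hDT').symm.trans ((hT'xy.symm.reachable).trans (hxa.mono hDT')))
    have hT'conn : T'.Connected := by
      rw [connected_iff]
      refine ⟨fun z z' => ?_, hG.nonempty⟩
      have key : ∀ z : V, T'.Reachable z a := by
        intro z
        obtain ⟨wk⟩ := hTtree.1.preconnected z a
        rcases reach_dichotomy (b := b) wk with h1 | h1
        · exact h1.mono hDT'
        · exact (h1.mono hDT').trans hT'ba
      exact (key z).trans (key z').symm
    -- acyclicity of T'
    have hT'acyc : T'.IsAcyclic := by
      intro z q hq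
      by_cases hmem : s(x, y) ∈ q.edges
      · have hr2 : (T' \ SimpleGraph.fromEdgeSet {s(x, y)}).Reachable x y :=
          (adj_and_reachable_delete_edges_iff_exists_cycle.mpr ⟨z, q, hq, hmem⟩).2
        have hle : T' \ SimpleGraph.fromEdgeSet {s(x, y)} ≤ D := by
          intro p' q' hpq
          have h1 : T'.Adj p' q' := ((sdiff_adj _ _ p' q').mp hpq).1
          have h2 : ¬(SimpleGraph.fromEdgeSet {s(x, y)}).Adj p' q' :=
            ((sdiff_adj _ _ p' q').mp hpq).2
          have h1' : s(p', q') ∈ T'.edgeSet := h1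
          rw [hT'edge] at h1'
          rcases h1' with hEq | ⟨h3, h4⟩
          · exact absurd ((fromEdgeSet_adj _).mpr ⟨by simp [hEq], h1.ne⟩) h2
          · exact (sdiff_adj _ _ p' q').mpr ⟨h3, fun hco =>
              h4 (((fromEdgeSet_adj _).mp hco).1)⟩
        have : D.Reachable x y := hr2.mono hle
        exact hdsnd (this.symm.trans hdfst)
      · have hqT : ∀ e ∈ q.edges, e ∈ T.edgeSet := by
          intro e he
          have : e ∈ T'.edgeSet := q.edges_subset_edgeSet he
          rw [hT'edge] at this
          rcases this with rfl | ⟨h1, -⟩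
          · exact absurd he hmem
          · exact h1
        exact hTtree.2 _ (hq.transfer hqT)
    -- cost computation
    have hfs : T'.edgeSet.toFinite.toFinset
        = insert s(x, y) (T.edgeSet.toFinite.toFinset \ {s(a, b)}) := by
      ext e
      simp only [Set.Finite.mem_toFinset, hT'edge, Set.mem_insert_iff, Set.mem_diff,
        Set.mem_singleton_iff, Finset.mem_insert, Finset.mem_sdiff, Finset.mem_singleton]
    have hcost : cost v T' = cost v T + (v s(x, y) - v s(a, b)) := by
      unfold cost
      rw [hfs, Finset.sum_insert (by
          simp only [Finset.mem_sdiff, Set.Finite.mem_toFinset]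
          exact fun h => absurd h.1 hxyT),
        Finset.sum_sdiff_eq_sub (by
          simp only [Finset.singleton_subset_iff, Set.Finite.mem_toFinset]
          exact heT),
        Finset.sum_singleton]
      abel
    have howa : owa w (cost v T') ≤ owa w (cost v T) := by
      rw [hcost]
      calc owa w (cost v T + (v s(x, y) - v s(a, b)))
          ≤ owa w (cost v T) + owa w (v s(x, y) - v s(a, b)) := owa_add_le hw _ _
        _ ≤ owa w (cost v T) + 0 := by
            have := hworst s(x, y) hxyc
            linarith
        _ = owa w (cost v T) := add_zero _
    exact ⟨T', hT'le, ⟨hT'conn, hT'acyc⟩, he0T',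
      fun T'' h1 h2 => le_trans howa (hTmin T'' ⟨h1, h2⟩)⟩
  · exact ⟨T, hTG, hTtree, heT, fun T'' h1 h2 => hTmin T'' ⟨h1, h2⟩⟩
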